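/- Let p > 2, ν > 0, α, β > 1 with α + β = p, and let γ ∈ ℝ. Suppose φ, ψ : ℝ → ℝ are twice differentiable, positive functions satisfying −φ''(t) + γφ(t) = φ(t)^{p-1} + να φ(t)^{α-1}ψ(t)^{β} and −ψ''(t) + γψ(t) = ψ(t)^{p-1} + νβ φ(t)^{α}ψ(t)^{β-1} for all t ∈ ℝ. Then for every t ∈ ℝ, (φ'ψ − φψ')'(t) + φ(t)ψ(t)^{p-1} g(φ(t)/ψ(t)) = 0, where g(s) = s^{p-2} + να s^{α-2} − 1 − νβ s^{α} for s > 0. -/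

import Mathlib

open Real

noncomputable section

theorem stmt (p ν α β γ : ℝ) (hp : 2 < p) (hν : 0 < ν) (hα : 1 < α) (hβ : 1 < β)
    (hαβ : α + β = p)
    (φ ψ : ℝ → ℝ)
    (hφ : Differentiable ℝ φ) (hφ' : Differentiable ℝ (deriv φ))
    (hψ : Differentiable ℝ ψ) (hψ' : Differentiable ℝ (deriv ψ))
    (hφpos : ∀ t : ℝ, 0 < φ t) (hψpos : ∀ t : ℝ, 0 < ψ t)
    (hφeq : ∀ t : ℝ, -(deriv (deriv φ) t) + γ * φ t =
      φ t ^ (p-1) + ν*α * φ t ^ (α-1) * ψ t ^ β)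
    (hψeq : ∀ t : ℝ, -(deriv (deriv ψ) t) + γ * ψ t =
      ψ t ^ (p-1) + ν*β * φ t ^ α * ψ t ^ (β-1)) :
    ∀ t : ℝ,
      deriv (fun s => deriv φ s * ψ s - φ s * deriv ψ s) t +
        φ t * ψ t ^ (p-1) *
          ((φ t / ψ t) ^ (p-2) + ν*α * (φ t / ψ t) ^ (α-2) - 1 - ν*β * (φ t / ψ t) ^ α) = 0 := by
  intro t
  have ha := hφpos t
  have hb := hψpos t
  set a := φ t with ha'
  set b := ψ t with hb'
  have hd : deriv (fun s => deriv φ s * ψ s - φ s * deriv ψ s) t =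
      deriv (deriv φ) t * b - a * deriv (deriv ψ) t := by
    rw [deriv_fun_sub ((hφ'.differentiableAt).fun_mul (hψ.differentiableAt))
        ((hφ.differentiableAt).fun_mul (hψ'.differentiableAt)),
      deriv_fun_mul hφ'.differentiableAt hψ.differentiableAt,
      deriv_fun_mul hφ.differentiableAt hψ'.differentiableAt]
    ring
  rw [hd]
  have h1 : deriv (deriv φ) t = γ * a - (a ^ (p-1) + ν*α * a ^ (α-1) * b ^ β) := by
    have := hφeq t; linarith
  have h2 : deriv (deriv ψ) t = γ * b - (b ^ (p-1) + ν*β * a ^ α * b ^ (β-1)) := by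
    have := hψeq t; linarith
  rw [h1, h2]
  have key : ∀ x : ℝ, a * b ^ (p-1) * (a/b) ^ x = a ^ (x+1) * b ^ (p-1-x) := by
    intro x
    rw [Real.div_rpow ha.le hb.le, Real.rpow_add ha, Real.rpow_one, Real.rpow_sub hb,
      show p-1-x = -1+(p-x) by ring]
    field_simp
    have hb1 : b ^ (-1 + (p - x)) * b * b ^ x = b ^ p := by
      rw [← Real.rpow_add_one hb.ne', ← Real.rpow_add hb]
      norm_num
    rw [← hb1]; simp only [Real.rpow_one]; ring
  have k1 : a * b ^ (p-1) * (a/b) ^ (p-2) = a ^ (p-1) * b := by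
    have := key (p-2)
    rw [show p-2+1 = p-1 by ring, show p-1-(p-2) = 1 by ring, Real.rpow_one] at this
    exact this
  have k2 : a * b ^ (p-1) * (a/b) ^ (α-2) = a ^ (α-1) * (b ^ β * b) := by
    have := key (α-2)
    rw [show α-2+1 = α-1 by ring, show p-1-(α-2) = β+1 by linarith,
      Real.rpow_add hb, Real.rpow_one] at this
    exact this
  have k3 : a * b ^ (p-1) * (a/b) ^ α = a ^ α * a * b ^ (β-1) := by
    have := key α
    rw [show α+1 = α+1 by ring, show p-1-α = β-1 by linarith,
      Real.rpow_add ha, Real.rpow_one] at this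
    linarith [this]
  linear_combination k1 + (ν*α) * k2 - (ν*β) * k3
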